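/- Let σ be a polynomial of degree ≤ 2 and κ a polynomial of degree ≤ 1 in the complex variable z. Define the first-order differential operators on functions of (t,s,z) ∈ ℂ³: N = t∂_t − s∂_s, A₊ = t∂_z + σ'(z)∂_s, A₋ = s∂_z + σ'(z)∂_t + κ(z)/t. Then [N, A₊] = A₊, [N, A₋] = −A₋, and [A₊, A₋] = σ''·N + κ'·1, where σ'' denotes the (constant) second derivative of σ and κ' the (constant) derivative of κ. -/

import Mathlib

open Polynomial

/-- Partial derivative in the `t` variable of a function of `(t,s,z) ∈ ℂ³`. -/
noncomputable def pdT (f : ℂ × ℂ × ℂ → ℂ) (p : ℂ × ℂ × ℂ) : ℂ := fderiv ℂ f p (1, 0, 0)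

/-- Partial derivative in the `s` variable. -/
noncomputable def pdS (f : ℂ × ℂ × ℂ → ℂ) (p : ℂ × ℂ × ℂ) : ℂ := fderiv ℂ f p (0, 1, 0)

/-- Partial derivative in the `z` variable. -/
noncomputable def pdZ (f : ℂ × ℂ × ℂ → ℂ) (p : ℂ × ℂ × ℂ) : ℂ := fderiv ℂ f p (0, 0, 1)

/-- `N = t ∂_t - s ∂_s`. -/
noncomputable def Nop (f : ℂ × ℂ × ℂ → ℂ) (p : ℂ × ℂ × ℂ) : ℂ :=
  p.1 * pdT f p - p.2.1 * pdS f p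

/-- `A₊ = t ∂_z + σ'(z) ∂_s`. -/
noncomputable def ApOp (σ : Polynomial ℂ) (f : ℂ × ℂ × ℂ → ℂ) (p : ℂ × ℂ × ℂ) : ℂ :=
  p.1 * pdZ f p + (derivative σ).eval p.2.2 * pdS f p

/-- `A₋ = s ∂_z + σ'(z) ∂_t + κ(z)/t`. -/
noncomputable def AmOp (σ κ : Polynomial ℂ) (f : ℂ × ℂ × ℂ → ℂ) (p : ℂ × ℂ × ℂ) : ℂ :=
  p.2.1 * pdZ f p + (derivative σ).eval p.2.2 * pdT f p + κ.eval p.2.2 / p.1 * f p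

/-! ### Auxiliary lemmas -/

/-- Symmetry of second partial derivatives. -/
lemma miller_D_comm {f : ℂ × ℂ × ℂ → ℂ} (hf : ContDiff ℂ ⊤ f) (p v w : ℂ × ℂ × ℂ) :
    fderiv ℂ (fun q => fderiv ℂ f q v) p w = fderiv ℂ (fun q => fderiv ℂ f q w) p v := by
  have hD : DifferentiableAt ℂ (fderiv ℂ f) p :=
    ((hf.fderiv_right (m := 1) le_top).differentiable one_ne_zero).differentiableAt
  have e : ∀ u : ℂ × ℂ × ℂ, fderiv ℂ (fun q => fderiv ℂ f q u) p
      = (fderiv ℂ (fderiv ℂ f) p).flip u := by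
    intro u
    rw [fderiv_clm_apply hD (differentiableAt_const u)]
    simp
  have hsym : IsSymmSndFDerivAt ℂ f p := hf.contDiffAt.isSymmSndFDerivAt le_top
  rw [e v, e w]
  simp only [ContinuousLinearMap.flip_apply]
  exact hsym w v

lemma miller_pd_diff {f : ℂ × ℂ × ℂ → ℂ} (hf : ContDiff ℂ ⊤ f) (w p : ℂ × ℂ × ℂ) :
    DifferentiableAt ℂ (fun q => fderiv ℂ f q w) p := by
  have : ContDiff ℂ ⊤ (fun q => fderiv ℂ f q w) :=
    (hf.fderiv_right le_top).clm_apply contDiff_const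
  exact (this.differentiable (by simp)).differentiableAt

lemma miller_D_add {g h : ℂ × ℂ × ℂ → ℂ} {p v : ℂ × ℂ × ℂ}
    (hg : DifferentiableAt ℂ g p) (hh : DifferentiableAt ℂ h p) :
    fderiv ℂ (fun q => g q + h q) p v = fderiv ℂ g p v + fderiv ℂ h p v := by
  rw [fderiv_fun_add hg hh]; rfl

lemma miller_D_sub {g h : ℂ × ℂ × ℂ → ℂ} {p v : ℂ × ℂ × ℂ}
    (hg : DifferentiableAt ℂ g p) (hh : DifferentiableAt ℂ h p) :
    fderiv ℂ (fun q => g q - h q) p v = fderiv ℂ g p v - fderiv ℂ h p v := by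
  rw [fderiv_fun_sub hg hh]; rfl

lemma miller_D_mul {g h : ℂ × ℂ × ℂ → ℂ} {p v : ℂ × ℂ × ℂ}
    (hg : DifferentiableAt ℂ g p) (hh : DifferentiableAt ℂ h p) :
    fderiv ℂ (fun q => g q * h q) p v = fderiv ℂ g p v * h p + g p * fderiv ℂ h p v := by
  rw [fderiv_fun_mul hg hh]
  simp only [ContinuousLinearMap.add_apply, ContinuousLinearMap.smul_apply, smul_eq_mul]
  ring

lemma miller_D_fst (p v : ℂ × ℂ × ℂ) :
    fderiv ℂ (fun q : ℂ × ℂ × ℂ => q.1) p v = v.1 := by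
  rw [show (fun q : ℂ × ℂ × ℂ => q.1) = Prod.fst from rfl, fderiv_fst]; rfl

lemma miller_D_snd1 (p v : ℂ × ℂ × ℂ) :
    fderiv ℂ (fun q : ℂ × ℂ × ℂ => q.2.1) p v = v.2.1 := by
  have h : (fun q : ℂ × ℂ × ℂ => q.2.1)
      = ((ContinuousLinearMap.fst ℂ ℂ ℂ).comp (ContinuousLinearMap.snd ℂ ℂ (ℂ × ℂ))) := rfl
  rw [h, ContinuousLinearMap.fderiv]; rfl

lemma miller_poly_hasFDeriv (P : Polynomial ℂ) (p : ℂ × ℂ × ℂ) :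
    HasFDerivAt (fun q : ℂ × ℂ × ℂ => P.eval q.2.2)
      ((ContinuousLinearMap.smulRight (1 : ℂ →L[ℂ] ℂ) ((derivative P).eval p.2.2)).comp
        ((ContinuousLinearMap.snd ℂ ℂ ℂ).comp (ContinuousLinearMap.snd ℂ ℂ (ℂ × ℂ)))) p := by
  have h1 : HasDerivAt (fun z : ℂ => P.eval z) ((derivative P).eval p.2.2) p.2.2 :=
    P.hasDerivAt p.2.2
  have h2 : HasFDerivAt (fun q : ℂ × ℂ × ℂ => q.2.2)
      ((ContinuousLinearMap.snd ℂ ℂ ℂ).comp (ContinuousLinearMap.snd ℂ ℂ (ℂ × ℂ))) p :=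
    ((ContinuousLinearMap.snd ℂ ℂ ℂ).comp (ContinuousLinearMap.snd ℂ ℂ (ℂ × ℂ))).hasFDerivAt
  exact h1.hasFDerivAt.comp p h2

lemma miller_D_poly (P : Polynomial ℂ) (p v : ℂ × ℂ × ℂ) :
    fderiv ℂ (fun q : ℂ × ℂ × ℂ => P.eval q.2.2) p v = (derivative P).eval p.2.2 * v.2.2 := by
  rw [(miller_poly_hasFDeriv P p).fderiv]
  simp [mul_comm]

lemma miller_poly_diff (P : Polynomial ℂ) (p : ℂ × ℂ × ℂ) :
    DifferentiableAt ℂ (fun q : ℂ × ℂ × ℂ => P.eval q.2.2) p :=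
  (miller_poly_hasFDeriv P p).differentiableAt

lemma miller_inv_hasFDeriv (p : ℂ × ℂ × ℂ) (hp : p.1 ≠ 0) :
    HasFDerivAt (fun q : ℂ × ℂ × ℂ => (q.1)⁻¹)
      ((ContinuousLinearMap.smulRight (1 : ℂ →L[ℂ] ℂ) (-(p.1 ^ 2)⁻¹)).comp
        (ContinuousLinearMap.fst ℂ ℂ (ℂ × ℂ))) p := by
  have h1 : HasDerivAt (fun z : ℂ => z⁻¹) (-(p.1 ^ 2)⁻¹) p.1 := hasDerivAt_inv hp
  have h2 : HasFDerivAt (fun q : ℂ × ℂ × ℂ => q.1)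
      (ContinuousLinearMap.fst ℂ ℂ (ℂ × ℂ)) p :=
    (ContinuousLinearMap.fst ℂ ℂ (ℂ × ℂ)).hasFDerivAt
  exact h1.hasFDerivAt.comp p h2

lemma miller_D_inv (p v : ℂ × ℂ × ℂ) (hp : p.1 ≠ 0) :
    fderiv ℂ (fun q : ℂ × ℂ × ℂ => (q.1)⁻¹) p v = -(p.1 ^ 2)⁻¹ * v.1 := by
  rw [(miller_inv_hasFDeriv p hp).fderiv]
  simp [mul_comm]

/-- Derivative of `N f` in direction `v`. -/
lemma miller_D_Nop {f : ℂ × ℂ × ℂ → ℂ} (hf : ContDiff ℂ ⊤ f) (p v : ℂ × ℂ × ℂ) :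
    fderiv ℂ (Nop f) p v
      = v.1 * pdT f p + p.1 * fderiv ℂ (pdT f) p v
        - v.2.1 * pdS f p - p.2.1 * fderiv ℂ (pdS f) p v := by
  have hT : DifferentiableAt ℂ (pdT f) p := miller_pd_diff hf (1,0,0) p
  have hS : DifferentiableAt ℂ (pdS f) p := miller_pd_diff hf (0,1,0) p
  have hfst : DifferentiableAt ℂ (fun q : ℂ × ℂ × ℂ => q.1) p := differentiableAt_fst
  have hsnd1 : DifferentiableAt ℂ (fun q : ℂ × ℂ × ℂ => q.2.1) p :=
    differentiableAt_fst.comp p differentiableAt_snd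
  have h1 : DifferentiableAt ℂ (fun q : ℂ × ℂ × ℂ => q.1 * pdT f q) p := hfst.mul hT
  have h2 : DifferentiableAt ℂ (fun q : ℂ × ℂ × ℂ => q.2.1 * pdS f q) p := hsnd1.mul hS
  show fderiv ℂ (fun q => q.1 * pdT f q - q.2.1 * pdS f q) p v = _
  rw [miller_D_sub h1 h2, miller_D_mul hfst hT, miller_D_mul hsnd1 hS,
    miller_D_fst, miller_D_snd1]
  ring

/-- Derivative of `A₊ f` in direction `v`. -/
lemma miller_D_Ap (σ : Polynomial ℂ) {f : ℂ × ℂ × ℂ → ℂ} (hf : ContDiff ℂ ⊤ f)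
    (p v : ℂ × ℂ × ℂ) :
    fderiv ℂ (ApOp σ f) p v
      = v.1 * pdZ f p + p.1 * fderiv ℂ (pdZ f) p v
        + (derivative (derivative σ)).eval p.2.2 * v.2.2 * pdS f p
        + (derivative σ).eval p.2.2 * fderiv ℂ (pdS f) p v := by
  have hZ : DifferentiableAt ℂ (pdZ f) p := miller_pd_diff hf (0,0,1) p
  have hS : DifferentiableAt ℂ (pdS f) p := miller_pd_diff hf (0,1,0) p
  have hfst : DifferentiableAt ℂ (fun q : ℂ × ℂ × ℂ => q.1) p := differentiableAt_fst
  have hpo : DifferentiableAt ℂ (fun q : ℂ × ℂ × ℂ => (derivative σ).eval q.2.2) p :=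
    miller_poly_diff _ p
  have h1 : DifferentiableAt ℂ (fun q : ℂ × ℂ × ℂ => q.1 * pdZ f q) p := hfst.mul hZ
  have h2 : DifferentiableAt ℂ
      (fun q : ℂ × ℂ × ℂ => (derivative σ).eval q.2.2 * pdS f q) p := hpo.mul hS
  show fderiv ℂ (fun q => q.1 * pdZ f q + (derivative σ).eval q.2.2 * pdS f q) p v = _
  rw [miller_D_add h1 h2, miller_D_mul hfst hZ, miller_D_mul hpo hS,
    miller_D_fst, miller_D_poly]
  ring

/-- Derivative of `A₋ f` in direction `v`. -/
lemma miller_D_Am (σ κ : Polynomial ℂ) {f : ℂ × ℂ × ℂ → ℂ} (hf : ContDiff ℂ ⊤ f)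
    (p v : ℂ × ℂ × ℂ) (hp : p.1 ≠ 0) :
    fderiv ℂ (AmOp σ κ f) p v
      = v.2.1 * pdZ f p + p.2.1 * fderiv ℂ (pdZ f) p v
        + (derivative (derivative σ)).eval p.2.2 * v.2.2 * pdT f p
        + (derivative σ).eval p.2.2 * fderiv ℂ (pdT f) p v
        + ((derivative κ).eval p.2.2 * v.2.2 * (p.1)⁻¹
            - κ.eval p.2.2 * (p.1 ^ 2)⁻¹ * v.1) * f p
        + κ.eval p.2.2 * (p.1)⁻¹ * fderiv ℂ f p v := by
  have hfd : DifferentiableAt ℂ f p := (hf.differentiable (by simp)).differentiableAt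
  have hinv : DifferentiableAt ℂ (fun q : ℂ × ℂ × ℂ => (q.1)⁻¹) p :=
    (miller_inv_hasFDeriv p hp).differentiableAt
  have hki : DifferentiableAt ℂ (fun q : ℂ × ℂ × ℂ => κ.eval q.2.2 * (q.1)⁻¹) p :=
    (miller_poly_diff _ p).mul hinv
  have hZ : DifferentiableAt ℂ (pdZ f) p := miller_pd_diff hf (0,0,1) p
  have hT : DifferentiableAt ℂ (pdT f) p := miller_pd_diff hf (1,0,0) p
  have hsnd1 : DifferentiableAt ℂ (fun q : ℂ × ℂ × ℂ => q.2.1) p :=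
    differentiableAt_fst.comp p differentiableAt_snd
  have hpo : DifferentiableAt ℂ (fun q : ℂ × ℂ × ℂ => (derivative σ).eval q.2.2) p :=
    miller_poly_diff _ p
  have hpk : DifferentiableAt ℂ (fun q : ℂ × ℂ × ℂ => κ.eval q.2.2) p :=
    miller_poly_diff _ p
  have h1 : DifferentiableAt ℂ (fun q : ℂ × ℂ × ℂ => q.2.1 * pdZ f q) p := hsnd1.mul hZ
  have h2 : DifferentiableAt ℂ
      (fun q : ℂ × ℂ × ℂ => (derivative σ).eval q.2.2 * pdT f q) p := hpo.mul hT
  have h3 : DifferentiableAt ℂ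
      (fun q : ℂ × ℂ × ℂ => κ.eval q.2.2 * (q.1)⁻¹ * f q) p :=
    hki.mul ((hf.differentiable (by simp)).differentiableAt)
  have hrw : AmOp σ κ f = fun q =>
      q.2.1 * pdZ f q + (derivative σ).eval q.2.2 * pdT f q
        + κ.eval q.2.2 * (q.1)⁻¹ * f q := by
    funext q
    simp only [AmOp, div_eq_mul_inv]
  rw [hrw, miller_D_add (h1.fun_add h2) h3, miller_D_add h1 h2,
    miller_D_mul hsnd1 hZ, miller_D_mul hpo hT,
    miller_D_mul hki hfd, miller_D_mul hpk hinv,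
    miller_D_snd1, miller_D_poly, miller_D_poly, miller_D_inv p v hp]
  ring

lemma miller_eval_const {P : Polynomial ℂ} (hP : P.natDegree = 0) (z : ℂ) :
    P.eval z = P.coeff 0 := by
  rw [Polynomial.eq_C_of_natDegree_eq_zero hP]; simp

/-- The commutation relations `[N,A₊] = A₊`, `[N,A₋] = -A₋`,
`[A₊,A₋] = σ''·N + κ'·𝟙` for the differential operators of Miller's Lie algebra. -/
theorem miller_commutation_relations (σ κ : Polynomial ℂ)
    (hσ : σ.natDegree ≤ 2) (hκ : κ.natDegree ≤ 1)
    (f : ℂ × ℂ × ℂ → ℂ) (hf : ContDiff ℂ ⊤ f) (p : ℂ × ℂ × ℂ) (hp : p.1 ≠ 0) :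
    Nop (ApOp σ f) p - ApOp σ (Nop f) p = ApOp σ f p ∧
    Nop (AmOp σ κ f) p - AmOp σ κ (Nop f) p = -(AmOp σ κ f p) ∧
    ApOp σ (AmOp σ κ f) p - AmOp σ κ (ApOp σ f) p
      = (derivative (derivative σ)).coeff 0 * Nop f p + (derivative κ).coeff 0 * f p := by
  set t := p.1 with ht
  set s := p.2.1 with hs
  -- constancy of σ'' and κ'
  have hσ'' : (derivative (derivative σ)).natDegree = 0 := by
    have h1 : (derivative σ).natDegree ≤ 1 :=
      le_trans (Polynomial.natDegree_derivative_le σ) (by omega)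
    have h2 : (derivative (derivative σ)).natDegree ≤ 0 :=
      le_trans (Polynomial.natDegree_derivative_le _) (by omega)
    omega
  have hκ' : (derivative κ).natDegree = 0 := by
    have h2 : (derivative κ).natDegree ≤ 0 :=
      le_trans (Polynomial.natDegree_derivative_le _) (by omega)
    omega
  have eσ : (derivative (derivative σ)).eval p.2.2 = (derivative (derivative σ)).coeff 0 :=
    miller_eval_const hσ'' _
  have eκ : (derivative κ).eval p.2.2 = (derivative κ).coeff 0 :=
    miller_eval_const hκ' _
  -- second-derivative commutation facts
  have c_zt : fderiv ℂ (pdZ f) p (1,0,0) = fderiv ℂ (pdT f) p (0,0,1) :=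
    miller_D_comm hf p _ _
  have c_st : fderiv ℂ (pdS f) p (1,0,0) = fderiv ℂ (pdT f) p (0,1,0) :=
    miller_D_comm hf p _ _
  have c_zs : fderiv ℂ (pdZ f) p (0,1,0) = fderiv ℂ (pdS f) p (0,0,1) :=
    miller_D_comm hf p _ _
  refine ⟨?_, ?_, ?_⟩
  · have e1 : Nop (ApOp σ f) p
        = t * fderiv ℂ (ApOp σ f) p (1,0,0) - s * fderiv ℂ (ApOp σ f) p (0,1,0) := rfl
    have e2 : ApOp σ (Nop f) p
        = t * fderiv ℂ (Nop f) p (0,0,1) + (derivative σ).eval p.2.2 * fderiv ℂ (Nop f) p (0,1,0) := rfl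
    rw [e1, e2, miller_D_Ap σ hf p (1,0,0), miller_D_Ap σ hf p (0,1,0),
      miller_D_Nop hf p (0,0,1), miller_D_Nop hf p (0,1,0), c_zt, c_st, c_zs]
    show _ = t * pdZ f p + (derivative σ).eval p.2.2 * pdS f p
    simp only [show ((1:ℂ),(0:ℂ),(0:ℂ)).1 = 1 from rfl,
      show ((1:ℂ),(0:ℂ),(0:ℂ)).2.1 = 0 from rfl,
      show ((1:ℂ),(0:ℂ),(0:ℂ)).2.2 = 0 from rfl,
      show ((0:ℂ),(1:ℂ),(0:ℂ)).1 = 0 from rfl,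
      show ((0:ℂ),(1:ℂ),(0:ℂ)).2.1 = 1 from rfl,
      show ((0:ℂ),(1:ℂ),(0:ℂ)).2.2 = 0 from rfl,
      show ((0:ℂ),(0:ℂ),(1:ℂ)).1 = 0 from rfl,
      show ((0:ℂ),(0:ℂ),(1:ℂ)).2.1 = 0 from rfl,
      show ((0:ℂ),(0:ℂ),(1:ℂ)).2.2 = 1 from rfl]
    ring
  · have e1 : Nop (AmOp σ κ f) p
        = t * fderiv ℂ (AmOp σ κ f) p (1,0,0) - s * fderiv ℂ (AmOp σ κ f) p (0,1,0) := rfl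
    have e2 : AmOp σ κ (Nop f) p
        = s * fderiv ℂ (Nop f) p (0,0,1)
          + (derivative σ).eval p.2.2 * fderiv ℂ (Nop f) p (1,0,0)
          + κ.eval p.2.2 / t * Nop f p := rfl
    have e3 : Nop f p = t * pdT f p - s * pdS f p := rfl
    rw [e1, e2, e3, miller_D_Am σ κ hf p (1,0,0) hp, miller_D_Am σ κ hf p (0,1,0) hp,
      miller_D_Nop hf p (0,0,1), miller_D_Nop hf p (1,0,0), c_zt, c_st, c_zs]
    show _ = -(s * pdZ f p + (derivative σ).eval p.2.2 * pdT f p + κ.eval p.2.2 / t * f p)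
    simp only [show ((1:ℂ),(0:ℂ),(0:ℂ)).1 = 1 from rfl,
      show ((1:ℂ),(0:ℂ),(0:ℂ)).2.1 = 0 from rfl,
      show ((1:ℂ),(0:ℂ),(0:ℂ)).2.2 = 0 from rfl,
      show ((0:ℂ),(1:ℂ),(0:ℂ)).1 = 0 from rfl,
      show ((0:ℂ),(1:ℂ),(0:ℂ)).2.1 = 1 from rfl,
      show ((0:ℂ),(1:ℂ),(0:ℂ)).2.2 = 0 from rfl,
      show ((0:ℂ),(0:ℂ),(1:ℂ)).1 = 0 from rfl,
      show ((0:ℂ),(0:ℂ),(1:ℂ)).2.1 = 0 from rfl,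
      show ((0:ℂ),(0:ℂ),(1:ℂ)).2.2 = 1 from rfl,
      show (fderiv ℂ f p) (1,0,0) = pdT f p from rfl,
      show (fderiv ℂ f p) (0,1,0) = pdS f p from rfl,
      show (fderiv ℂ f p) (0,0,1) = pdZ f p from rfl]
    simp only [← ht]
    field_simp [hp]
    ring
  · have e1 : ApOp σ (AmOp σ κ f) p
        = t * fderiv ℂ (AmOp σ κ f) p (0,0,1)
          + (derivative σ).eval p.2.2 * fderiv ℂ (AmOp σ κ f) p (0,1,0) := rfl
    have e2 : AmOp σ κ (ApOp σ f) p
        = s * fderiv ℂ (ApOp σ f) p (0,0,1)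
          + (derivative σ).eval p.2.2 * fderiv ℂ (ApOp σ f) p (1,0,0)
          + κ.eval p.2.2 / t * ApOp σ f p := rfl
    have e3 : ApOp σ f p = t * pdZ f p + (derivative σ).eval p.2.2 * pdS f p := rfl
    have e4 : Nop f p = t * pdT f p - s * pdS f p := rfl
    rw [e1, e2, e3, e4, miller_D_Am σ κ hf p (0,0,1) hp, miller_D_Am σ κ hf p (0,1,0) hp,
      miller_D_Ap σ hf p (0,0,1), miller_D_Ap σ hf p (1,0,0), c_zt, c_st, c_zs, eσ, eκ]
    simp only [show ((1:ℂ),(0:ℂ),(0:ℂ)).1 = 1 from rfl,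
      show ((1:ℂ),(0:ℂ),(0:ℂ)).2.1 = 0 from rfl,
      show ((1:ℂ),(0:ℂ),(0:ℂ)).2.2 = 0 from rfl,
      show ((0:ℂ),(1:ℂ),(0:ℂ)).1 = 0 from rfl,
      show ((0:ℂ),(1:ℂ),(0:ℂ)).2.1 = 1 from rfl,
      show ((0:ℂ),(1:ℂ),(0:ℂ)).2.2 = 0 from rfl,
      show ((0:ℂ),(0:ℂ),(1:ℂ)).1 = 0 from rfl,
      show ((0:ℂ),(0:ℂ),(1:ℂ)).2.1 = 0 from rfl,
      show ((0:ℂ),(0:ℂ),(1:ℂ)).2.2 = 1 from rfl,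
      show (fderiv ℂ f p) (1,0,0) = pdT f p from rfl,
      show (fderiv ℂ f p) (0,1,0) = pdS f p from rfl,
      show (fderiv ℂ f p) (0,0,1) = pdZ f p from rfl]
    simp only [← ht]
    field_simp [hp]
    ring
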